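/- There exists a convex set of zero volume (a square) inscribed in the rhombic dodecahedron D₃ circumscribing the unit sphere, i.e., a planar square contained in D₃ that touches all twelve faces of D₃. -/

import Mathlib

open RealInnerProductSpace MeasureTheory

/-- The A₃ root system: the 12 unit vectors that are permutations of `(±1/√2, ±1/√2, 0)`. -/
def A3roots : Set (EuclideanSpace ℝ (Fin 3)) :=
  {v | ∃ (i j : Fin 3) (s t : ℝ), i ≠ j ∧ (s = 1 ∨ s = -1) ∧ (t = 1 ∨ t = -1) ∧
    v = fun k => if k = i then s / Real.sqrt 2 else if k = j then t / Real.sqrt 2 else 0}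

/-- The rhombic dodecahedron circumscribing the unit sphere: the dual of the difference
body of a regular simplex. -/
def D3 : Set (EuclideanSpace ℝ (Fin 3)) := {x | ∀ v ∈ A3roots, ⟪x, v⟫ ≤ 1}

/-- First leg of the square: `(√2/2, √2/2, 0)`. -/
noncomputable def sqA : EuclideanSpace ℝ (Fin 3) :=
  WithLp.toLp 2 (fun k : Fin 3 => if k = 2 then 0 else Real.sqrt 2 / 2)

/-- Second leg of the square: `(√2/2, -√2/2, 0)`. -/
noncomputable def sqB : EuclideanSpace ℝ (Fin 3) :=
  WithLp.toLp 2 (fun k : Fin 3 => if k = 0 then Real.sqrt 2 / 2 else if k = 1 then -(Real.sqrt 2 / 2) else 0)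

/-- The four vertices of the square. -/
noncomputable def E1 : EuclideanSpace ℝ (Fin 3) := WithLp.toLp 2 (fun k : Fin 3 => if k = 0 then Real.sqrt 2 else 0)
noncomputable def E2 : EuclideanSpace ℝ (Fin 3) := WithLp.toLp 2 (fun k : Fin 3 => if k = 1 then Real.sqrt 2 else 0)
noncomputable def E3 : EuclideanSpace ℝ (Fin 3) := WithLp.toLp 2 (fun k : Fin 3 => if k = 1 then -Real.sqrt 2 else 0)
noncomputable def E4 : EuclideanSpace ℝ (Fin 3) := WithLp.toLp 2 (fun k : Fin 3 => if k = 0 then -Real.sqrt 2 else 0)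

lemma hE1 : (0:EuclideanSpace ℝ (Fin 3)) + sqA + sqB = E1 := by
  ext k; fin_cases k <;> simp [sqA, sqB, E1] <;> ring
lemma hE2 : (0:EuclideanSpace ℝ (Fin 3)) + sqA - sqB = E2 := by
  ext k; fin_cases k <;> simp [sqA, sqB, E2] <;> ring
lemma hE3 : (0:EuclideanSpace ℝ (Fin 3)) - sqA + sqB = E3 := by
  ext k; fin_cases k <;> simp [sqA, sqB, E3] <;> ring
lemma hE4 : (0:EuclideanSpace ℝ (Fin 3)) - sqA - sqB = E4 := by
  ext k; fin_cases k <;> simp [sqA, sqB, E4] <;> ring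

lemma vertexSet :
    ({(0:EuclideanSpace ℝ (Fin 3)) + sqA + sqB, 0 + sqA - sqB, 0 - sqA + sqB, 0 - sqA - sqB} :
      Set (EuclideanSpace ℝ (Fin 3))) = {E1, E2, E3, E4} := by
  rw [hE1, hE2, hE3, hE4]

lemma aux1 (u s : ℝ) (hs : |s| ≤ 1) (h : |u| ≤ Real.sqrt 2) : u * (s / Real.sqrt 2) ≤ 1 := by
  have h2 : (0:ℝ) < Real.sqrt 2 := Real.sqrt_pos.mpr (by norm_num)
  have hus : u * s ≤ |u| := by
    calc u * s ≤ |u * s| := le_abs_self _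
    _ = |u| * |s| := abs_mul _ _
    _ ≤ |u| * 1 := by nlinarith [abs_nonneg u]
    _ = |u| := mul_one _
  have heq : u * (s / Real.sqrt 2) = (u * s) / Real.sqrt 2 := by ring
  rw [heq, div_le_one h2]
  linarith

lemma aux2 (u w s t : ℝ) (hs : |s| ≤ 1) (ht : |t| ≤ 1)
    (h : |u| + |w| ≤ Real.sqrt 2) :
    u * (s / Real.sqrt 2) + w * (t / Real.sqrt 2) ≤ 1 := by
  have h2 : (0:ℝ) < Real.sqrt 2 := Real.sqrt_pos.mpr (by norm_num)
  have hus : u * s ≤ |u| := by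
    calc u * s ≤ |u * s| := le_abs_self _
    _ = |u| * |s| := abs_mul _ _
    _ ≤ |u| * 1 := by nlinarith [abs_nonneg u]
    _ = |u| := mul_one _
  have hwt : w * t ≤ |w| := by
    calc w * t ≤ |w * t| := le_abs_self _
    _ = |w| * |t| := abs_mul _ _
    _ ≤ |w| * 1 := by nlinarith [abs_nonneg w]
    _ = |w| := mul_one _
  have heq : u * (s / Real.sqrt 2) + w * (t / Real.sqrt 2)
      = (u * s + w * t) / Real.sqrt 2 := by ring
  rw [heq, div_le_one h2]
  linarith

/-- Any point of the plane `x₂ = 0` whose first two coordinates satisfy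
`|x₀| + |x₁| ≤ √2` lies in the rhombic dodecahedron. -/
lemma mem_D3 (x : EuclideanSpace ℝ (Fin 3)) (h01 : |x 0| + |x 1| ≤ Real.sqrt 2)
    (h2 : x 2 = 0) : x ∈ D3 := by
  rintro v ⟨i, j, s, t, hij, hs, ht, hv⟩
  obtain rfl : v = WithLp.toLp 2 (fun k => if k = i then s / Real.sqrt 2 else if k = j then t / Real.sqrt 2 else 0) := congrArg (WithLp.toLp 2) hv
  simp only [PiLp.inner_apply, RCLike.inner_apply', Fin.sum_univ_three, PiLp.toLp_apply]
  fin_cases i <;> fin_cases j <;> simp_all <;>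
    rcases hs with rfl | rfl <;> rcases ht with rfl | rfl <;>
    first
    | exact aux2 _ _ _ _ (by norm_num) (by norm_num) h01
    | exact aux1 _ _ (by norm_num) (by linarith [abs_nonneg (x 0), abs_nonneg (x 1)])

/-- Each of the twelve faces is touched by one of the four vertices. -/
lemma touch : ∀ v ∈ A3roots, ∃ x ∈ ({E1, E2, E3, E4} : Set (EuclideanSpace ℝ (Fin 3))),
    ⟪x, v⟫ = 1 := by
  rintro v ⟨i, j, s, t, hij, hs, ht, hv⟩
  obtain rfl : v = WithLp.toLp 2 (fun k => if k = i then s / Real.sqrt 2 else if k = j then t / Real.sqrt 2 else 0) := congrArg (WithLp.toLp 2) hv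
  fin_cases i <;> fin_cases j <;> simp_all <;>
    rcases hs with rfl | rfl <;> rcases ht with rfl | rfl <;>
    first
    | (left; simp [PiLp.inner_apply, Fin.sum_univ_three, E1, neg_div, mul_neg, neg_neg]; done)
    | (right; left; simp [PiLp.inner_apply, Fin.sum_univ_three, E2, neg_div, mul_neg, neg_neg]; done)
    | (right; right; left; simp [PiLp.inner_apply, Fin.sum_univ_three, E3, neg_div, mul_neg, neg_neg]; done)
    | (right; right; right; simp [PiLp.inner_apply, Fin.sum_univ_three, E4, neg_div, mul_neg, neg_neg]; done)

/-- The plane `x₂ = 0` as a submodule. -/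
def plane2 : Submodule ℝ (EuclideanSpace ℝ (Fin 3)) where
  carrier := {x | x 2 = 0}
  add_mem' := by
    intro x y hx hy
    simp only [Set.mem_setOf_eq] at *
    simp [PiLp.add_apply, hx, hy]
  zero_mem' := rfl
  smul_mem' := by
    intro c x hx
    simp only [Set.mem_setOf_eq] at *
    simp [PiLp.smul_apply, hx]

lemma D3_convex : Convex ℝ D3 := by
  intro x hx y hy α β hα hβ hαβ v hv
  have hxv := hx v hv
  have hyv := hy v hv
  have : ⟪α • x + β • y, v⟫ = α * ⟪x, v⟫ + β * ⟪y, v⟫ := by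
    simp [inner_add_left, inner_smul_left]
  rw [this]
  nlinarith

/-- There is a planar square of zero volume inscribed in the rhombic dodecahedron,
touching all twelve faces. -/
theorem exists_square_inscribed_in_rhombic_dodecahedron :
    ∃ (p a b : EuclideanSpace ℝ (Fin 3)),
      ⟪a, b⟫ = 0 ∧ ‖a‖ = ‖b‖ ∧ a ≠ 0 ∧
      (convexHull ℝ {p + a + b, p + a - b, p - a + b, p - a - b} ⊆ D3) ∧
      (∀ v ∈ A3roots, ∃ x ∈ convexHull ℝ {p + a + b, p + a - b, p - a + b, p - a - b},
        ⟪x, v⟫ = 1) ∧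
      volume (convexHull ℝ ({p + a + b, p + a - b, p - a + b, p - a - b} :
        Set (EuclideanSpace ℝ (Fin 3)))) = 0 := by
  have hs2 : (0:ℝ) ≤ Real.sqrt 2 := Real.sqrt_nonneg 2
  refine ⟨0, sqA, sqB, ?_, ?_, ?_, ?_, ?_, ?_⟩
  · simp [PiLp.inner_apply, RCLike.inner_apply, Fin.sum_univ_three, sqA, sqB]
  · rw [EuclideanSpace.norm_eq, EuclideanSpace.norm_eq]
    congr 1
    simp [Fin.sum_univ_three, sqA, sqB]
  · intro h
    have h0 : sqA 0 = 0 := by rw [h]; rfl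
    simp [sqA] at h0
  · -- containment in D3
    rw [vertexSet]
    apply convexHull_min ?_ D3_convex
    rintro x (rfl | rfl | rfl | rfl) <;>
      apply mem_D3 <;>
      simp [E1, E2, E3, E4, abs_of_nonneg, abs_of_nonpos, neg_nonpos, hs2]
  · -- touching all twelve faces
    intro v hv
    obtain ⟨x, hx, hxv⟩ := touch v hv
    refine ⟨x, ?_, hxv⟩
    rw [vertexSet]
    exact subset_convexHull _ _ hx
  · -- zero volume
    rw [vertexSet]
    have hsub : convexHull ℝ ({E1, E2, E3, E4} : Set (EuclideanSpace ℝ (Fin 3)))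
        ⊆ (plane2 : Set _) := by
      apply convexHull_min ?_ plane2.convex
      rintro x (rfl | rfl | rfl | rfl) <;>
        · show _ ∈ plane2
          simp only [plane2, E1, E2, E3, E4]
          change (WithLp.ofLp (p := 2) (_ : EuclideanSpace ℝ (Fin 3)) : Fin 3 → ℝ) 2 = 0
          simp
    have hplane : volume (plane2 : Set (EuclideanSpace ℝ (Fin 3))) = 0 := by
      apply Measure.addHaar_submodule
      intro h
      have hm : (WithLp.toLp 2 (fun _ : Fin 3 => (1:ℝ)) : EuclideanSpace ℝ (Fin 3)) ∈ plane2 := by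
        rw [h]; trivial
      have h1 : ((WithLp.toLp 2 (fun _ : Fin 3 => (1:ℝ)) : EuclideanSpace ℝ (Fin 3))) 2 = 0 := hm
      norm_num at h1
    exact measure_mono_null hsub hplane
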